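/- Let (L, α) be an A/k-Lie–Rinehart algebra, f ∈ Z²(Der_k(A), A), and L(α*f) := A·z ⊕ L with left action b(az+x) = (ba)z + bx, right action (az+x)b = (ab + α(x)(b))z + ax, and bracket [az+x, bz+y] = (α(x)(b) - α(y)(a) + f(α(x),α(y)))z + [x,y]. Then L(α*f) is a k-Lie algebra (Jacobi identity holds), z is central, and the anchor π_f(az+x) := α(x) satisfies [u, cv] = c[u,v] + π_f(u)(c)v and uc = cu + π_f(u)(c)z for all u,v ∈ L(α*f), c ∈ A; i.e., (L(α*f), π_f, [,], z) is a D-Lie algebra. -/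

import Mathlib

/-- for an `A/k`-Lie–Rinehart algebra `(L, α)` and a 2-cocycle
`f ∈ Z²(Der_k(A), A)`, the twisted extension `L(α*f) = A·z ⊕ L` with bracket
`[az+x, bz+y] = (α(x)(b) - α(y)(a) + f(α(x),α(y)))z + [x,y]`, left action
`b(az+x) = (ba)z + bx` and right action `(az+x)b = (ab + α(x)(b))z + bx`
is a D-Lie algebra: the Jacobi identity holds, `z = (1,0)` is central, and
the anchor `π_f(az+x) = α(x)` satisfies `[u, cv] = c[u,v] + π_f(u)(c)v` and
`uc = cu + π_f(u)(c)z`. -/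
theorem lieRinehart_extension_is_DLie {k A L : Type*} [CommRing k] [CommRing A]
    [Algebra k A] [LieRing L] [Module A L]
    (α : L →ₗ[A] Derivation k A A)
    (hαLie : ∀ x y : L, α ⁅x, y⁆ = ⁅α x, α y⁆)
    (hLeib : ∀ (x y : L) (a : A), ⁅x, a • y⁆ = a • ⁅x, y⁆ + (α x) a • y)
    (f : Derivation k A A →ₗ[A] Derivation k A A →ₗ[A] A)
    (halt : ∀ x : Derivation k A A, f x x = 0)
    (hcocycle : ∀ x y z : Derivation k A A,
      x (f y z) - y (f x z) + z (f x y)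
        - f ⁅x, y⁆ z + f ⁅x, z⁆ y - f ⁅y, z⁆ x = 0) :
    let br : A × L → A × L → A × L := fun u v =>
      (α u.2 v.1 - α v.2 u.1 + f (α u.2) (α v.2), ⁅u.2, v.2⁆)
    let lsm : A → A × L → A × L := fun c u => (c * u.1, c • u.2)
    let rsm : A × L → A → A × L := fun u b => (u.1 * b + α u.2 b, b • u.2)
    let z : A × L := ((1 : A), (0 : L))
    (∀ u v w : A × L, br (br u v) w + br (br v w) u + br (br w u) v = 0) ∧
    (∀ u : A × L, br z u = 0 ∧ br u z = 0) ∧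
    (∀ (u v : A × L) (c : A), br u (lsm c v) = lsm c (br u v) + lsm (α u.2 c) v) ∧
    (∀ (u : A × L) (c : A), rsm u c = lsm c u + lsm (α u.2 c) z) := by
  intro br lsm rsm z
  have fskew : ∀ X Y : Derivation k A A, f X Y = - f Y X := by
    intro X Y
    have h := halt (X + Y)
    simp only [map_add, LinearMap.add_apply, halt X, halt Y] at h
    linear_combination h
  refine ⟨?_, ?_, ?_, ?_⟩
  · rintro ⟨a, x⟩ ⟨b, y⟩ ⟨c, w⟩
    have hJ : ⁅⁅x, y⁆, w⁆ + ⁅⁅y, w⁆, x⁆ + ⁅⁅w, x⁆, y⁆ = 0 := by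
      rw [← lie_skew ⁅x, y⁆ w, ← lie_skew ⁅y, w⁆ x, ← lie_skew ⁅w, x⁆ y,
        ← neg_add, ← neg_add, neg_eq_zero]
      exact lie_jacobi w x y
    have hc := hcocycle (α x) (α y) (α w)
    have h1 : (α y) ((f (α w)) (α x)) = -((α y) ((f (α x)) (α w))) := by
      rw [fskew (α w) (α x), map_neg]
    have h2 : (f ⁅α w, α x⁆) (α y) = -((f ⁅α x, α w⁆) (α y)) := by
      rw [← lie_skew (α x) (α w), map_neg, LinearMap.neg_apply, neg_neg]
    refine Prod.ext ?_ ?_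
    · simp only [br, hαLie, Prod.fst_add, Prod.snd_add, Prod.fst_zero, map_sub, map_add,
        Derivation.commutator_apply]
      linear_combination -hc - h1 + h2
    · simpa [br] using hJ
  · rintro ⟨a, x⟩
    constructor <;>
      simp [br, z, Prod.ext_iff, fskew (α x) (α 0)]
  · rintro ⟨a, x⟩ ⟨b, y⟩ c
    refine Prod.ext ?_ ?_
    · simp only [br, lsm, Prod.fst_add, map_smul, Derivation.leibniz,
        smul_eq_mul, LinearMap.map_smul₂, LinearMap.smul_apply,
        Derivation.smul_apply]
      ring
    · simp only [br, lsm, Prod.snd_add]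
      rw [hLeib]
  · rintro ⟨a, x⟩ c
    refine Prod.ext ?_ ?_ <;>
      simp [rsm, lsm, z, mul_comm]
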